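/- Let l, d be positive integers, α, Y ∈ M_{l×d}(ℂ), and suppose Y·αᴴ = U·Σ·Vᴴ where U, V ∈ M_l(ℂ) are unitary and Σ ∈ M_l(ℂ) is diagonal with nonnegative real diagonal entries. Then D̂ = U·Vᴴ minimizes the representation error over all unitary matrices: for every D ∈ M_l(ℂ) with Dᴴ D = I, ‖(U·Vᴴ)·α − Y‖_F ≤ ‖D·α − Y‖_F. -/

import Mathlib

open Matrix

private lemma frob_expand {l d : ℕ} (A Y : Matrix (Fin l) (Fin d) ℂ) :
    ∑ s : Fin l, ∑ t : Fin d, ‖A s t - Y s t‖ ^ 2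
    = ((∑ s : Fin l, ∑ t : Fin d, Complex.normSq (A s t))
      + (∑ s : Fin l, ∑ t : Fin d, Complex.normSq (Y s t)))
      - 2 * (Matrix.trace (A * Yᴴ)).re := by
  have htr : (Matrix.trace (A * Yᴴ)).re
      = ∑ s : Fin l, ∑ t : Fin d, (A s t * (starRingEnd ℂ) (Y s t)).re := by
    simp [Matrix.trace, Matrix.mul_apply, Matrix.conjTranspose_apply,
      Matrix.diag, Complex.re_sum]
  have hpt : ∀ z w : ℂ, ‖z - w‖ ^ 2
      = Complex.normSq z + Complex.normSq w - 2 * (z * (starRingEnd ℂ) w).re := by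
    intro z w
    rw [Complex.sq_norm, Complex.normSq_sub]
  simp only [hpt, htr, Finset.sum_sub_distrib, Finset.sum_add_distrib, Finset.mul_sum]

private lemma frob_invariant {l d : ℕ} (D : Matrix (Fin l) (Fin l) ℂ)
    (hD : Dᴴ * D = 1) (α : Matrix (Fin l) (Fin d) ℂ) :
    ∑ s : Fin l, ∑ t : Fin d, Complex.normSq ((D * α) s t)
    = ∑ s : Fin l, ∑ t : Fin d, Complex.normSq (α s t) := by
  have key : (D * α)ᴴ * (D * α) = αᴴ * α := by
    rw [Matrix.conjTranspose_mul, Matrix.mul_assoc, ← Matrix.mul_assoc Dᴴ D α, hD,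
      Matrix.one_mul]
  have h1 : ∀ (B : Matrix (Fin l) (Fin d) ℂ),
      ((Matrix.trace (Bᴴ * B)).re : ℝ)
      = ∑ s : Fin l, ∑ t : Fin d, Complex.normSq (B s t) := by
    intro B
    rw [Finset.sum_comm]
    simp [Matrix.trace, Matrix.mul_apply, Matrix.conjTranspose_apply,
      Matrix.diag, Complex.re_sum, Complex.normSq_eq_conj_mul_self,
      Complex.normSq_apply]
  rw [← h1, ← h1, key]

/-- Closed-form solution of the orthogonal-dictionary update subproblem: if
`Y αᴴ = U Σ Vᴴ` is a singular value decomposition, then `D̂ = U Vᴴ` minimizes the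
Frobenius representation error `‖Dα − Y‖_F` over all unitary matrices `D`. -/
theorem dictionary_update_closed_form {l d : ℕ} (hl : 0 < l) (hd : 0 < d)
    (α Y : Matrix (Fin l) (Fin d) ℂ) (U V : Matrix (Fin l) (Fin l) ℂ)
    (σ : Fin l → ℝ) (hσ : ∀ i, 0 ≤ σ i)
    (hU : Uᴴ * U = 1) (hV : Vᴴ * V = 1)
    (hsvd : Y * αᴴ = U * Matrix.diagonal (fun i => (σ i : ℂ)) * Vᴴ) :
    ∀ D : Matrix (Fin l) (Fin l) ℂ, Dᴴ * D = 1 →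
      Real.sqrt (∑ s : Fin l, ∑ t : Fin d, ‖((U * Vᴴ) * α) s t - Y s t‖ ^ 2) ≤
      Real.sqrt (∑ s : Fin l, ∑ t : Fin d, ‖(D * α) s t - Y s t‖ ^ 2) := by
  intro D hD
  have hUU : U * Uᴴ = 1 := mul_eq_one_comm.mp hU
  have hVV : V * Vᴴ = 1 := mul_eq_one_comm.mp hV
  -- α * Yᴴ = V * Σ * Uᴴ
  have hαY : α * Yᴴ = V * Matrix.diagonal (fun i => (σ i : ℂ)) * Uᴴ := by
    have := congrArg Matrix.conjTranspose hsvd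
    simpa [Matrix.conjTranspose_mul, Matrix.mul_assoc, Matrix.diagonal_conjTranspose,
      Pi.star_def, Complex.star_def, Complex.conj_ofReal, Function.comp] using this
  -- trace formula for any D
  have htrace : ∀ W : Matrix (Fin l) (Fin l) ℂ,
      Matrix.trace (W * (α * Yᴴ)) = ∑ i : Fin l, (Uᴴ * W * V) i i * (σ i : ℂ) := by
    intro W
    rw [hαY]
    have : W * (V * Matrix.diagonal (fun i => (σ i : ℂ)) * Uᴴ)
        = (W * V * Matrix.diagonal (fun i => (σ i : ℂ))) * Uᴴ := by
      simp [Matrix.mul_assoc]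
    rw [this, Matrix.trace_mul_comm, ← Matrix.mul_assoc, ← Matrix.mul_assoc]
    simp [Matrix.trace, Matrix.diag, Matrix.mul_diagonal]
  -- bound on diagonal entries of a unitary matrix
  have hdiag_bound : ∀ (W : Matrix (Fin l) (Fin l) ℂ), Wᴴ * W = 1 →
      ∀ i, (W i i).re ≤ 1 := by
    intro W hW i
    have h1 : ∑ k : Fin l, Complex.normSq (W k i) = 1 := by
      have := congrFun (congrFun hW i) i
      simp only [Matrix.mul_apply, Matrix.conjTranspose_apply, Matrix.one_apply_eq] at this
      have := congrArg Complex.re this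
      simpa [Complex.re_sum, Complex.normSq_eq_conj_mul_self, Complex.normSq_apply] using this
    have h2 : Complex.normSq (W i i) ≤ 1 := by
      rw [← h1]
      exact Finset.single_le_sum (f := fun k => Complex.normSq (W k i))
        (fun k _ => Complex.normSq_nonneg _) (Finset.mem_univ i)
    have h3 : ‖W i i‖ ≤ 1 := by
      rw [← Real.sqrt_one]
      rw [Complex.norm_def]
      exact Real.sqrt_le_sqrt h2
    calc (W i i).re ≤ ‖W i i‖ := Complex.re_le_norm _
      _ ≤ 1 := h3
  -- the trace inequality
  have hkey : (Matrix.trace (D * (α * Yᴴ))).re ≤ (Matrix.trace ((U * Vᴴ) * (α * Yᴴ))).re := by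
    rw [htrace D, htrace (U * Vᴴ)]
    have hWhat : Uᴴ * (U * Vᴴ) * V = 1 := by
      rw [← Matrix.mul_assoc, hU, Matrix.one_mul, hV]
    rw [hWhat]
    have hWunit : (Uᴴ * D * V)ᴴ * (Uᴴ * D * V) = 1 := by
      simp only [Matrix.conjTranspose_mul, Matrix.conjTranspose_conjTranspose,
        Matrix.mul_assoc]
      rw [← Matrix.mul_assoc U Uᴴ, hUU, Matrix.one_mul,
        ← Matrix.mul_assoc Dᴴ D, hD, Matrix.one_mul, hV]
    simp only [Complex.re_sum]
    apply Finset.sum_le_sum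
    intro i _
    have : ((Uᴴ * D * V) i i * (σ i : ℂ)).re = ((Uᴴ * D * V) i i).re * σ i := by
      simp [Complex.mul_re]
    rw [this]
    have h1 : ((1 : Matrix (Fin l) (Fin l) ℂ) i i * (σ i : ℂ)).re = σ i := by
      simp
    rw [h1]
    calc ((Uᴴ * D * V) i i).re * σ i ≤ 1 * σ i :=
          mul_le_mul_of_nonneg_right (hdiag_bound _ hWunit i) (hσ i)
      _ = σ i := one_mul _
  -- conclude
  apply Real.sqrt_le_sqrt
  rw [frob_expand, frob_expand, frob_invariant (U * Vᴴ) _ α, frob_invariant D hD α]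
  · have h1 : (U * Vᴴ) * α * Yᴴ = (U * Vᴴ) * (α * Yᴴ) := by rw [Matrix.mul_assoc]
    have h2 : D * α * Yᴴ = D * (α * Yᴴ) := by rw [Matrix.mul_assoc]
    rw [h1, h2]
    linarith [hkey]
  · simp only [Matrix.conjTranspose_mul, Matrix.conjTranspose_conjTranspose,
      Matrix.mul_assoc]
    rw [← Matrix.mul_assoc Uᴴ U, hU, Matrix.one_mul, hVV]
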